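/- The symmetric 2×2 matrix A(a₁,a₂) = [[cosh(4a₂), sinh(2(a₁+a₂))], [sinh(2(a₁+a₂)), cosh(4a₁)]] has determinant cosh²(2(a₂−a₁)) and is positive definite for all (a₁,a₂) ∈ ℝ². -/

import Mathlib

noncomputable def Amat (a₁ a₂ : ℝ) : Matrix (Fin 2) (Fin 2) ℝ :=
  !![Real.cosh (4 * a₂), Real.sinh (2 * (a₁ + a₂));
     Real.sinh (2 * (a₁ + a₂)), Real.cosh (4 * a₁)]

lemma Amat_det (a₁ a₂ : ℝ) :
    (Amat a₁ a₂).det = Real.cosh (2 * (a₂ - a₁)) ^ 2 := by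
  have h1 : (4 : ℝ) * a₁ = 2 * a₁ + 2 * a₁ := by ring
  have h2 : (4 : ℝ) * a₂ = 2 * a₂ + 2 * a₂ := by ring
  have h3 : (2 : ℝ) * (a₁ + a₂) = 2 * a₁ + 2 * a₂ := by ring
  have h4 : (2 : ℝ) * (a₂ - a₁) = 2 * a₂ - 2 * a₁ := by ring
  simp only [Amat, Matrix.det_fin_two_of, h1, h2, h3, h4,
    Real.cosh_add, Real.sinh_add, Real.cosh_sub, Real.sinh_sub]
  ring

theorem Amat_det_posDef (a₁ a₂ : ℝ) :
    (Amat a₁ a₂).det = Real.cosh (2 * (a₂ - a₁)) ^ 2 ∧ (Amat a₁ a₂).PosDef := by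
  refine ⟨Amat_det a₁ a₂, ?_, ?_⟩
  · simp only [Matrix.IsHermitian, Matrix.conjTranspose_eq_transpose_of_trivial]
    ext i j
    fin_cases i <;> fin_cases j <;> rfl
  · intro x hx
    have hdet : Real.cosh (4 * a₂) * Real.cosh (4 * a₁)
        - Real.sinh (2 * (a₁ + a₂)) ^ 2 = Real.cosh (2 * (a₂ - a₁)) ^ 2 := by
      have := Amat_det a₁ a₂
      simp only [Amat, Matrix.det_fin_two_of] at this
      nlinarith [this]
    have hA : (1 : ℝ) ≤ Real.cosh (4 * a₂) := Real.one_le_cosh _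
    have hC : (1 : ℝ) ≤ Real.cosh (4 * a₁) := Real.one_le_cosh _
    have hD : (1 : ℝ) ≤ Real.cosh (2 * (a₂ - a₁)) := Real.one_le_cosh _
    have hxx : x 0 ≠ 0 ∨ x 1 ≠ 0 := by
      by_contra h
      push_neg at h
      apply hx
      ext i; fin_cases i <;> simp [h.1, h.2]
    simp only [Amat, Matrix.mulVec, dotProduct, Finsupp.sum_fintype, zero_mul, mul_zero, add_zero, implies_true, Fin.sum_univ_two,
      Matrix.cons_val', Matrix.cons_val_zero, Matrix.cons_val_one, Matrix.head_cons,
      Matrix.empty_val', Matrix.cons_val_fin_one, Matrix.head_fin_const,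
      Pi.star_apply, star_trivial, Matrix.of_apply]
    set A := Real.cosh (4 * a₂)
    set B := Real.sinh (2 * (a₁ + a₂))
    set C := Real.cosh (4 * a₁)
    set D := Real.cosh (2 * (a₂ - a₁))
    rcases hxx with h | h
    · have key : C * (x 0 * (A * x 0 + B * x 1) + x 1 * (B * x 0 + C * x 1))
          = (B * x 0 + C * x 1) ^ 2 + D ^ 2 * x 0 ^ 2 := by
        rw [← hdet]; ring
      have h0 : (0:ℝ) < x 0 ^ 2 := by positivity
      nlinarith [sq_nonneg (B * x 0 + C * x 1), sq_nonneg D,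
        mul_pos (mul_pos (by linarith : (0:ℝ) < D) (by linarith : (0:ℝ) < D)) h0]
    · have key : A * (x 0 * (A * x 0 + B * x 1) + x 1 * (B * x 0 + C * x 1))
          = (A * x 0 + B * x 1) ^ 2 + D ^ 2 * x 1 ^ 2 := by
        rw [← hdet]; ring
      have h0 : (0:ℝ) < x 1 ^ 2 := by positivity
      nlinarith [sq_nonneg (A * x 0 + B * x 1), sq_nonneg D,
        mul_pos (mul_pos (by linarith : (0:ℝ) < D) (by linarith : (0:ℝ) < D)) h0]
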